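/- Let a_i > 0, p_i real with 0 < p_i ≤ 1 for all i, and t_n = (a_1 + (a_2 + ... + a_n^{p_n})^{p_2})^{p_1} the n-th approximant of the continued power form. Then for every n ≥ 1, t_{n+1} - t_n ≤ a_{n+1}^{p_{n+1}} · ∏_{i=1}^n p_i · a_i^{p_i - 1}. -/

import Mathlib

/-- `pow_form a p n i = (a i + (a (i+1) + ⋯ + (a n) ^ (p n)) ^ (p (i+1))) ^ (p i)`;
the `n`-th approximant `t n` of the continued power form is `pow_form a p n 1`. -/
noncomputable def powForm (a : ℕ → ℝ) (p : ℕ → ℝ) (n : ℕ) : ℕ → ℝ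
  | i => if _ : i ≤ n then (a i + powForm a p n (i + 1)) ^ (p i) else 0
termination_by i => n + 1 - i
decreasing_by omega

lemma powForm_eq (a p : ℕ → ℝ) (n i : ℕ) (h : i ≤ n) :
    powForm a p n i = (a i + powForm a p n (i + 1)) ^ (p i) := by
  rw [powForm]; simp [h]

lemma powForm_eq_zero (a p : ℕ → ℝ) (n i : ℕ) (h : n < i) :
    powForm a p n i = 0 := by
  rw [powForm]; simp [Nat.not_le.mpr h]

/-- key analytic inequality -/
lemma diff_le_aux {y d q : ℝ} (hy : 0 < y) (hd : 0 ≤ d) (hq0 : 0 < q) (hq1 : q ≤ 1) :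
    (y + d) ^ q - y ^ q ≤ q * y ^ (q - 1) * d := by
  have h0 : (0:ℝ) ≤ d / y := div_nonneg hd hy.le
  have hs : (-1 : ℝ) ≤ d / y := by linarith
  have hb := rpow_one_add_le_one_add_mul_self hs hq0.le hq1 (s := d / y)
  have h1 : y + d = y * (1 + d / y) := by field_simp
  have h2 : (y * (1 + d / y)) ^ q = y ^ q * (1 + d / y) ^ q := by
    rw [Real.mul_rpow hy.le (by linarith)]
  calc (y + d) ^ q - y ^ q = y ^ q * (1 + d / y) ^ q - y ^ q := by rw [h1, h2]
    _ ≤ y ^ q * (1 + q * (d / y)) - y ^ q := by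
        have : (0:ℝ) ≤ y ^ q := (Real.rpow_pos_of_pos hy q).le
        nlinarith
    _ = q * (y ^ q / y) * d := by ring
    _ = q * y ^ (q - 1) * d := by
        rw [Real.rpow_sub hy, Real.rpow_one]

lemma powForm_nonneg_aux (a p : ℕ → ℝ) (n : ℕ)
    (ha : ∀ m, 1 ≤ m → 0 < a m) :
    ∀ k i, 1 ≤ i → n < i + k → 0 ≤ powForm a p n i := by
  intro k
  induction k with
  | zero => intro i hi1 hik; rw [powForm_eq_zero a p n i (by omega)]
  | succ k ih =>
    intro i hi1 hik
    by_cases h : i ≤ n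
    · rw [powForm_eq a p n i h]
      have h1 := ha i hi1
      have h2 := ih (i+1) (by omega) (by omega)
      positivity
    · rw [powForm_eq_zero a p n i (Nat.not_le.mp h)]

lemma powForm_nonneg (a p : ℕ → ℝ) (n : ℕ)
    (ha : ∀ m, 1 ≤ m → 0 < a m) :
    ∀ i, 1 ≤ i → 0 ≤ powForm a p n i := fun i hi =>
  powForm_nonneg_aux a p n ha (n+1) i hi (by omega)

lemma powForm_mono (a p : ℕ → ℝ) (n : ℕ)
    (ha : ∀ m, 1 ≤ m → 0 < a m) (hp : ∀ m, 1 ≤ m → 0 < p m ∧ p m ≤ 1) :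
    ∀ k i, 1 ≤ i → i = n + 1 - k → powForm a p n i ≤ powForm a p (n + 1) i := by
  intro k
  induction k with
  | zero =>
    intro i hi1 hik
    have : n < i := by omega
    rw [powForm_eq_zero a p n i this]
    exact powForm_nonneg a p (n+1) ha i hi1
  | succ k ih =>
    intro i hi1 hik
    by_cases h : i ≤ n
    · rw [powForm_eq a p n i h, powForm_eq a p (n+1) i (by omega)]
      have hrec : powForm a p n (i+1) ≤ powForm a p (n+1) (i+1) := by
        rcases Nat.lt_or_ge (n+1-k) (i+1) with hc | hc
        · -- i+1 > n+1-k means... use n < i+1? i ≤ n so i+1 ≤ n+1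
          rcases Nat.lt_or_ge n (i+1) with hc2 | hc2
          · rw [powForm_eq_zero a p n (i+1) hc2]
            exact powForm_nonneg a p (n+1) ha (i+1) (by omega)
          · -- i+1 ≤ n but n+1-k < i+1: contradiction with i = n+1-(k+1)
            omega
        · exact ih (i+1) (by omega) (by omega)
      apply Real.rpow_le_rpow (by have := ha i hi1; have := powForm_nonneg a p n ha (i+1) (by omega); linarith)
        (by linarith) (hp i hi1).1.le
    · rw [powForm_eq_zero a p n i (Nat.not_le.mp h)]
      exact powForm_nonneg a p (n+1) ha i hi1

lemma powForm_key (a p : ℕ → ℝ) (n : ℕ) (hn : 1 ≤ n)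
    (ha : ∀ m, 1 ≤ m → 0 < a m) (hp : ∀ m, 1 ≤ m → 0 < p m ∧ p m ≤ 1) :
    ∀ k i, 1 ≤ i → i ≤ n → i = n - k →
      powForm a p (n + 1) i - powForm a p n i ≤
        (a (n + 1)) ^ (p (n + 1)) * ∏ j ∈ Finset.Icc i n, p j * (a j) ^ (p j - 1) := by
  intro k
  induction k with
  | zero =>
    intro i hi1 hin hik
    have hi : i = n := by omega
    rw [hi]
    rw [powForm_eq a p (n+1) n (by omega), powForm_eq a p n n le_rfl,
      powForm_eq_zero a p n (n+1) (by omega),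
      powForm_eq a p (n+1) (n+1) le_rfl, powForm_eq_zero a p (n+1) (n+2) (by omega)]
    simp only [add_zero]
    have h := diff_le_aux (ha n hn) (d := (a (n+1)) ^ (p (n+1)))
      (Real.rpow_nonneg (ha (n+1) (by omega)).le _) (hp n hn).1 (hp n hn).2
    rw [Finset.Icc_self, Finset.prod_singleton]
    calc (a n + (a (n+1)) ^ (p (n+1))) ^ p n - a n ^ p n
        ≤ p n * a n ^ (p n - 1) * (a (n+1)) ^ (p (n+1)) := h
      _ = (a (n+1)) ^ (p (n+1)) * (p n * a n ^ (p n - 1)) := by ring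
  | succ k ih =>
    intro i hi1 hin hik
    rcases Nat.lt_or_ge i n with hlt | hge
    swap
    · -- i = n, same as base case
      have hi : i = n := by omega
      omega
    -- i < n
    have hrec := ih (i+1) (by omega) (by omega) (by omega)
    set T := powForm a p n (i+1) with hT
    set T' := powForm a p (n+1) (i+1) with hT'
    have hTle : T ≤ T' := powForm_mono a p n ha hp (n - i) (i+1) (by omega) (by omega)
    have hT0 : 0 ≤ T := powForm_nonneg a p n ha (i+1) (by omega)
    rw [powForm_eq a p (n+1) i (by omega), powForm_eq a p n i hin, ← hT, ← hT']
    have hai := ha i hi1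
    have step : (a i + T') ^ p i - (a i + T) ^ p i ≤ p i * (a i) ^ (p i - 1) * (T' - T) := by
      have h1 : a i + T' = (a i + T) + (T' - T) := by ring
      rw [h1]
      calc (a i + T + (T' - T)) ^ p i - (a i + T) ^ p i
          ≤ p i * (a i + T) ^ (p i - 1) * (T' - T) :=
            diff_le_aux (by linarith) (by linarith) (hp i hi1).1 (hp i hi1).2
        _ ≤ p i * (a i) ^ (p i - 1) * (T' - T) := by
            apply mul_le_mul_of_nonneg_right _ (by linarith)
            apply mul_le_mul_of_nonneg_left _ (hp i hi1).1.le
            exact Real.rpow_le_rpow_of_nonpos hai (by linarith) (by linarith [(hp i hi1).2])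
    have hprod : ∏ j ∈ Finset.Icc i n, p j * (a j) ^ (p j - 1)
        = (p i * (a i) ^ (p i - 1)) * ∏ j ∈ Finset.Icc (i+1) n, p j * (a j) ^ (p j - 1) := by
      rw [show Finset.Icc i n = insert i (Finset.Icc (i+1) n) from by
        ext x; simp; omega, Finset.prod_insert (by simp)]
    have hc : 0 ≤ p i * (a i) ^ (p i - 1) := by
      have := (hp i hi1).1; positivity
    calc (a i + T') ^ p i - (a i + T) ^ p i
        ≤ p i * (a i) ^ (p i - 1) * (T' - T) := step
      _ ≤ p i * (a i) ^ (p i - 1) *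
          ((a (n+1)) ^ (p (n+1)) * ∏ j ∈ Finset.Icc (i+1) n, p j * (a j) ^ (p j - 1)) :=
            mul_le_mul_of_nonneg_left hrec hc
      _ = (a (n+1)) ^ (p (n+1)) * ∏ j ∈ Finset.Icc i n, p j * (a j) ^ (p j - 1) := by
            rw [hprod]; ring

theorem power_form_polya_szego (a : ℕ → ℝ) (p : ℕ → ℝ)
    (ha : ∀ n, 1 ≤ n → 0 < a n) (hp : ∀ n, 1 ≤ n → 0 < p n ∧ p n ≤ 1) :
    ∀ n, 1 ≤ n →
      powForm a p (n + 1) 1 - powForm a p n 1 ≤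
        (a (n + 1)) ^ (p (n + 1)) *
          ∏ i ∈ Finset.Icc 1 n, p i * (a i) ^ (p i - 1) := by
  intro n hn
  exact powForm_key a p n hn ha hp (n - 1) 1 le_rfl hn (by omega)
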